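/- The one-dimensional entropy conservative flux F̃ = (F̃₁, F̃₂, F̃₃) defined by F̃₁ = ⟨z₁⟩_ln⟨uW⟩, F̃₂ = Q⁻¹[(1 + 1/((Γ-1)⟨z₂⟩_ln))⟨z₂⟩⟨⟨z₃⟩⟩_L F̃₁ + ⟨z₁⟩⟨W⟩² + ⟨z₁⟩⟨z₃⟩⟨W⟩⟨⟨z₃⟩⟩_L], F̃₃ = Q⁻¹[⟨z₁⟩⟨W⟩⟨uW⟩ + ⟨z₁⟩⟨z₃⟩⟨uW⟩⟨⟨z₃⟩⟩_L + (1 + 1/((Γ-1)⟨z₂⟩_ln))F̃₁(⟨z₂⟩⟨W⟩ + ⟨z₂⟩⟨z₃⟩⟨⟨z₃⟩⟩_L)], with Q = ⟨z₂⟩⟨W⟩² + ⟨z₂⟩⟨z₃⟩⟨W⟩⟨⟨z₃⟩⟩_L - ⟨z₂⟩⟨uW⟩⟨⟨z₃⟩⟩_L, is consistent: when (ρ_L,u_L,p_L) = (ρ_R,u_R,p_R) = (ρ,u,p), one has F̃₁ = ρuW, F̃₂ = ρhW²u² + p, and F̃₃ = ρhW²u, where h = 1 + Γp/((Γ-1)ρ).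 -/

import Mathlib

open Real

/-- Consistency of the 1D entropy conservative flux: when the left and right
states coincide with `(ρ,u,p)`, the arithmetic and logarithmic means reduce to
the common values, the Lorentz mean reduces to `uW³`, and the flux components
equal `(ρuW, ρhW²u² + p, ρhW²u)`. -/
theorem ec_flux_consistent (Γ ρ u p : ℝ)
    (hΓ : 1 < Γ) (hΓ2 : Γ ≤ 2) (hρ : 0 < ρ) (hp : 0 < p) (hu : |u| < 1)
    (W h LM z1 z2 F1 Q F2 F3 : ℝ)
    (hW : W = 1 / Real.sqrt (1 - u ^ 2))
    (hh : h = 1 + Γ * p / ((Γ - 1) * ρ))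
    -- the Lorentz mean at equal states
    (hLM : LM = (u + u) /
      (Real.sqrt (1 - u ^ 2) * Real.sqrt (1 - u ^ 2) *
        (Real.sqrt (1 - u ^ 2) + Real.sqrt (1 - u ^ 2))))
    -- arithmetic and logarithmic means of z₁ = ρ and z₂ = ρ/p at equal states
    (hz1 : z1 = ρ) (hz2 : z2 = ρ / p)
    (hF1 : F1 = z1 * (u * W))
    (hQ : Q = z2 * W ^ 2 + z2 * u * W * LM - z2 * (u * W) * LM)
    (hF2 : F2 = Q⁻¹ * ((1 + 1 / ((Γ - 1) * z2)) * z2 * LM * F1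
      + z1 * W ^ 2 + z1 * u * W * LM))
    (hF3 : F3 = Q⁻¹ * (z1 * W * (u * W) + z1 * u * (u * W) * LM
      + (1 + 1 / ((Γ - 1) * z2)) * F1 * (z2 * W + z2 * u * LM))) :
    LM = u * W ^ 3 ∧
    F1 = ρ * u * W ∧
    F2 = ρ * h * W ^ 2 * u ^ 2 + p ∧
    F3 = ρ * h * W ^ 2 * u := by
  have h1u : (0:ℝ) < 1 - u ^ 2 := by
    have := abs_lt.mp hu
    nlinarith [this.1, this.2]
  set s := Real.sqrt (1 - u ^ 2) with hs
  have hs0 : 0 < s := Real.sqrt_pos.mpr h1u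
  have hs2 : s ^ 2 = 1 - u ^ 2 := Real.sq_sqrt h1u.le
  have hsne : s ≠ 0 := hs0.ne'
  have hΓ1 : Γ - 1 ≠ 0 := by linarith
  have hρ0 : ρ ≠ 0 := hρ.ne'
  have hp0 : p ≠ 0 := hp.ne'
  have hLM' : LM = u / s ^ 3 := by rw [hLM]; field_simp
  have hQ' : Q = (ρ / p) * (1 / s) ^ 2 := by rw [hQ, hz2, hW, hLM']; ring
  refine ⟨?_, ?_, ?_, ?_⟩
  · rw [hLM', hW]; ring
  · rw [hF1, hz1]; ring
  · rw [hF2, hF1, hz1, hz2, hLM', hW, hQ', hh]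
    field_simp
    ring_nf
  · rw [hF3, hF1, hz1, hz2, hLM', hW, hQ', hh]
    field_simp
    ring_nf
    linear_combination (u*(p*Γ+Γ*ρ-ρ)) * hs2
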